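/- Let G be a finite permutation group on Ω with a blow-up decomposition E, let Γ₀ ∈ E, and suppose the component G^{Γ₀} is quasiprimitive on Γ₀ with non-abelian socle. Then G is quasiprimitive on Ω. -/
import Mathlib


open scoped Pointwise

namespace QP

variable {Ω : Type*}

/-- `P` is a partition of `Ω`. -/
def IsPartition (P : Set (Set Ω)) : Prop :=
  ∅ ∉ P ∧ ∀ ω : Ω, ∃! b : Set Ω, b ∈ P ∧ ω ∈ b

/-- A proper partition: neither `{Ω}` nor the partition into singletons. -/
def IsProperPartition (P : Set (Set Ω)) : Prop :=
  IsPartition P ∧ P ≠ {Set.univ} ∧ ¬ ∀ b ∈ P, ∃ ω : Ω, b = {ω}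

/-- The pointwise stabiliser of the partition `P` (kernel of the action on `P`),
as a subgroup of `Sym(Ω)`: the permutations fixing every block of `P` setwise. -/
def partKernel (P : Set (Set Ω)) : Subgroup (Equiv.Perm Ω) where
  carrier := {g | ∀ b ∈ P, g • b = b}
  one_mem' := by intro b hb; simp
  mul_mem' := by
    intro g h hg hh b hb
    rw [mul_smul, hh b hb, hg b hb]
  inv_mem' := by
    intro g hg b hb
    rw [inv_smul_eq_iff, hg b hb]

/-- The setwise stabiliser of a partition `P` in `Sym(Ω)`. -/
def partStab (P : Set (Set Ω)) : Subgroup (Equiv.Perm Ω) :=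
  MulAction.stabilizer (Equiv.Perm Ω) P

/-- The permutation of the set of blocks of `P` induced by an element of
the stabiliser of `P`. -/
noncomputable def blockPerm (P : Set (Set Ω)) (g : ↥(partStab P)) : Equiv.Perm ↥P where
  toFun b := ⟨(g : Equiv.Perm Ω) • (b : Set Ω), by
    have h1 : (g : Equiv.Perm Ω) • (b : Set Ω) ∈ (g : Equiv.Perm Ω) • P :=
      Set.smul_mem_smul_set b.2
    rwa [g.2] at h1⟩
  invFun b := ⟨(g : Equiv.Perm Ω)⁻¹ • (b : Set Ω), by
    have h0 : (g : Equiv.Perm Ω) • P = P := g.2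
    have h2 : ((g : Equiv.Perm Ω)⁻¹) • P = P := by
      rw [inv_smul_eq_iff, h0]
    have h1 : (g : Equiv.Perm Ω)⁻¹ • (b : Set Ω) ∈ (g : Equiv.Perm Ω)⁻¹ • P :=
      Set.smul_mem_smul_set b.2
    rwa [h2] at h1⟩
  left_inv b := by
    apply Subtype.ext
    simp
  right_inv b := by
    apply Subtype.ext
    simp

/-- The homomorphism from the stabiliser of a partition `P` to the symmetric
group on the set of blocks of `P`. -/
noncomputable def componentHom (P : Set (Set Ω)) : ↥(partStab P) →* Equiv.Perm ↥P where
  toFun := blockPerm P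
  map_one' := by
    apply Equiv.ext; intro b
    apply Subtype.ext
    simp [blockPerm]
  map_mul' := by
    intro g h
    apply Equiv.ext; intro b
    apply Subtype.ext
    simp [blockPerm, mul_smul]

/-- The component `G^P` of `G` on a partition `P` : the permutation group
induced on the set of blocks of `P` by the setwise stabiliser of `P` in `G`. -/
noncomputable def component (G : Subgroup (Equiv.Perm Ω)) (P : Set (Set Ω)) :
    Subgroup (Equiv.Perm ↥P) :=
  Subgroup.map (componentHom P) (G.subgroupOf (partStab P))

section abstr
variable {X : Type*} [Group X]

/-- `N` is a normal subgroup of the (sub)group `G`. -/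
def IsNormalIn (N G : Subgroup X) : Prop :=
  N ≤ G ∧ ∀ g ∈ G, ∀ n ∈ N, g * n * g⁻¹ ∈ N

/-- `N` is a minimal normal subgroup of `G`. -/
def IsMinimalNormalIn (N G : Subgroup X) : Prop :=
  IsNormalIn N G ∧ N ≠ ⊥ ∧
    ∀ K : Subgroup X, IsNormalIn K G → K ≠ ⊥ → K ≤ N → K = N

/-- The socle of `G`: the subgroup generated by all minimal normal subgroups. -/
def socle (G : Subgroup X) : Subgroup X :=
  ⨆ N ∈ {N : Subgroup X | IsMinimalNormalIn N G}, N

/-- `M` is the internal direct product of the family `N` of subgroups. -/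
def IsInternalDirectProductOver {ι : Type*} (M : Subgroup X) (N : ι → Subgroup X) : Prop :=
  (∀ i, N i ≤ M) ∧
  (∀ i j, i ≠ j → ∀ x ∈ N i, ∀ y ∈ N j, Commute x y) ∧
  (⨆ i, N i) = M ∧
  (∀ i, N i ⊓ (⨆ j ∈ ({i}ᶜ : Set ι), N j) = ⊥)

end abstr

/-- A transitive permutation group on `α`. -/
def IsTransitivePerm {α : Type*} (H : Subgroup (Equiv.Perm α)) : Prop :=
  ∀ a b : α, ∃ g ∈ H, g a = b

/-- A regular permutation group: transitive with trivial point stabilisers. -/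
def IsRegularPerm {α : Type*} (H : Subgroup (Equiv.Perm α)) : Prop :=
  IsTransitivePerm H ∧ ∀ g ∈ H, ∀ a : α, g a = a → g = 1

/-- A semiregular permutation group: all point stabilisers are trivial. -/
def IsSemiregularPerm {α : Type*} (H : Subgroup (Equiv.Perm α)) : Prop :=
  ∀ g ∈ H, ∀ a : α, g a = a → g = 1

/-- A quasiprimitive permutation group: transitive, and every nontrivial
normal subgroup is transitive. -/
def IsQuasiprimitivePerm {α : Type*} (H : Subgroup (Equiv.Perm α)) : Prop :=
  IsTransitivePerm H ∧
    ∀ N : Subgroup (Equiv.Perm α), IsNormalIn N H → N ≠ ⊥ → IsTransitivePerm N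

section indexed

variable {ι : Type*}

/-- A Cartesian decomposition, indexed form: a family of pairwise distinct
proper partitions such that any choice of blocks, one from each partition,
intersects in exactly one point. -/
def IsCartesianDecomp (Γ : ι → Set (Set Ω)) : Prop :=
  (∀ i, IsProperPartition (Γ i)) ∧ Function.Injective Γ ∧
  ∀ c : ι → Set Ω, (∀ i, c i ∈ Γ i) → ∃! ω : Ω, ∀ i, ω ∈ c i

/-- The Cartesian decomposition `Γ` is `M`-normal, with `N i` playing the
role of `M^{Γ i}`: each partition is `M`-invariant, `M` is the internal direct
product of the `N i`, each `N i` acts faithfully on `Γ i`, and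
`∏_{j ≠ i} N j` is the kernel of the `M`-action on `Γ i`. -/
structure IsNormalDecomp (M : Subgroup (Equiv.Perm Ω)) (Γ : ι → Set (Set Ω))
    (N : ι → Subgroup (Equiv.Perm Ω)) : Prop where
  invariant : ∀ i, ∀ g ∈ M, ∀ b ∈ Γ i, g • b ∈ Γ i
  product : IsInternalDirectProductOver M N
  faithful : ∀ i, N i ⊓ partKernel (Γ i) = ⊥
  kernel : ∀ i, M ⊓ partKernel (Γ i) = ⨆ j ∈ ({i}ᶜ : Set ι), N j

end indexed

section setbased

/-- A Cartesian decomposition, as a (finite) set of proper partitions. -/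
def IsCartesianDecompSet (E : Set (Set (Set Ω))) : Prop :=
  E.Finite ∧ (∀ P ∈ E, IsProperPartition P) ∧
  ∀ c : Set (Set Ω) → Set Ω, (∀ P ∈ E, c P ∈ P) → ∃! ω : Ω, ∀ P ∈ E, ω ∈ c P

/-- `E` is a homogeneous Cartesian decomposition: all partitions have the same size. -/
def IsHomogeneous (E : Set (Set (Set Ω))) : Prop :=
  ∀ P ∈ E, ∀ Q ∈ E, Nat.card ↥P = Nat.card ↥Q

/-- `E` is invariant under `G`: `G` permutes the partitions in `E`. -/
def InvariantDec (G : Subgroup (Equiv.Perm Ω)) (E : Set (Set (Set Ω))) : Prop :=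
  ∀ g ∈ G, ∀ P ∈ E, g • P ∈ E

/-- `G` is transitive on `E`. -/
def TransitiveOnDec (G : Subgroup (Equiv.Perm Ω)) (E : Set (Set (Set Ω))) : Prop :=
  ∀ P ∈ E, ∀ Q ∈ E, ∃ g ∈ G, g • P = Q

/-- The Cartesian decomposition `E` is `M`-normal: `M` fixes each partition
in `E` setwise, and `M` is the internal direct product of subgroups `N P`
(`P ∈ E`), where `∏_{Q ≠ P} N Q` is the kernel of the `M`-action on `P`. -/
def IsNormalDecompSet (M : Subgroup (Equiv.Perm Ω)) (E : Set (Set (Set Ω))) : Prop :=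
  (∀ g ∈ M, ∀ P ∈ E, g • P = P) ∧
  ∃ N : Set (Set Ω) → Subgroup (Equiv.Perm Ω),
    (∀ P ∈ E, N P ≤ M) ∧
    (∀ P Q, P ∈ E → Q ∈ E → P ≠ Q → ∀ x ∈ N P, ∀ y ∈ N Q, Commute x y) ∧
    (⨆ P ∈ E, N P) = M ∧
    (∀ P ∈ E, N P ⊓ (⨆ Q ∈ E \ {P}, N Q) = ⊥) ∧
    (∀ P ∈ E, M ⊓ partKernel P = ⨆ Q ∈ E \ {P}, N Q)

/-- `E` is a blow-up decomposition for `G`: a `G`-invariant Cartesian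
decomposition on which `G` acts transitively, which is `M`-normal for some
transitive normal subgroup `M` of `G` such that `M^Γ = Soc(G^Γ)` for every
`Γ ∈ E`. -/
def IsBlowUpDecomp (G : Subgroup (Equiv.Perm Ω)) (E : Set (Set (Set Ω))) : Prop :=
  IsCartesianDecompSet E ∧ InvariantDec G E ∧ TransitiveOnDec G E ∧
  ∃ M : Subgroup (Equiv.Perm Ω), IsNormalIn M G ∧ IsTransitivePerm M ∧
    IsNormalDecompSet M E ∧ ∀ P ∈ E, component M P = socle (component G P)

end setbased

end QP

namespace QPAux

open QP

variable {Ω : Type*}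

lemma mem_partStab {P : Set (Set Ω)} {g : Equiv.Perm Ω} :
    g ∈ partStab P ↔ g • P = P := Iff.rfl

lemma conj_mem_partKernel {g x : Equiv.Perm Ω} {P : Set (Set Ω)}
    (h : x ∈ partKernel P) : g * x * g⁻¹ ∈ partKernel (g • P) := by
  intro b hb
  obtain ⟨c, hc, rfl⟩ := hb
  have hxc : x • c = c := h c hc
  show (g * x * g⁻¹) • (g • c) = g • c
  rw [mul_smul, mul_smul, inv_smul_smul, hxc]

lemma conj_mem_partKernel' {g x : Equiv.Perm Ω} {P : Set (Set Ω)}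
    (h : x ∈ partKernel (g • P)) : g⁻¹ * x * g ∈ partKernel P := by
  have h2 := conj_mem_partKernel (g := g⁻¹) h
  rwa [inv_smul_smul] at h2

open Classical in
/-- The block of the partition `P` containing `ω` (junk value if none). -/
noncomputable def blockOf (P : Set (Set Ω)) (ω : Ω) : Set Ω :=
  if h : ∃ b, b ∈ P ∧ ω ∈ b then h.choose else ∅

lemma blockOf_spec {P : Set (Set Ω)} (hP : IsPartition P) (ω : Ω) :
    blockOf P ω ∈ P ∧ ω ∈ blockOf P ω := by
  obtain ⟨b, hb, -⟩ := hP.2 ω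
  have h : ∃ b, b ∈ P ∧ ω ∈ b := ⟨b, hb⟩
  rw [blockOf]
  rw [dif_pos h]
  exact h.choose_spec

lemma blockOf_unique {P : Set (Set Ω)} (hP : IsPartition P) {ω : Ω} {b : Set Ω}
    (hb : b ∈ P) (hω : ω ∈ b) : b = blockOf P ω := by
  obtain ⟨c, hc, hu⟩ := hP.2 ω
  have h1 := hu b ⟨hb, hω⟩
  have h2 := hu _ ⟨(blockOf_spec hP ω).1, (blockOf_spec hP ω).2⟩
  rw [h1, h2]

/-- An element lying in the kernel of every partition of a Cartesian
decomposition is trivial. -/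
lemma eq_one_of_mem_all_kernels {E : Set (Set (Set Ω))}
    (hCart : IsCartesianDecompSet E) {x : Equiv.Perm Ω}
    (h : ∀ P ∈ E, x ∈ partKernel P) : x = 1 := by
  ext ω
  obtain ⟨ω', hω', huniq⟩ := hCart.2.2 (fun P => blockOf P ω)
    (fun P hP => (blockOf_spec (hCart.2.1 P hP).1 ω).1)
  have h1 : ∀ P ∈ E, ω ∈ blockOf P ω :=
    fun P hP => (blockOf_spec (hCart.2.1 P hP).1 ω).2
  have h2 : ∀ P ∈ E, x ω ∈ blockOf P ω := by
    intro P hP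
    have hker : x • blockOf P ω = blockOf P ω :=
      h P hP _ (blockOf_spec (hCart.2.1 P hP).1 ω).1
    have : x • ω ∈ x • blockOf P ω := Set.smul_mem_smul_set (h1 P hP)
    rwa [hker] at this
  have e1 := huniq _ h2
  have e2 := huniq _ h1
  rw [e1, e2]
  rfl

section comp

variable (A B : Subgroup (Equiv.Perm Ω)) (P : Set (Set Ω))

lemma mem_component {x : Equiv.Perm ↥P} :
    x ∈ component A P ↔ ∃ y : ↥(partStab P), (y : Equiv.Perm Ω) ∈ A ∧ componentHom P y = x := by
  constructor
  · rintro ⟨y, hy, rfl⟩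
    exact ⟨y, Subgroup.mem_subgroupOf.mp hy, rfl⟩
  · rintro ⟨y, hy, rfl⟩
    exact ⟨y, Subgroup.mem_subgroupOf.mpr hy, rfl⟩

lemma componentHom_apply (y : ↥(partStab P)) (b : ↥P) :
    ((componentHom P y b : Set Ω)) = (y : Equiv.Perm Ω) • (b : Set Ω) := rfl

lemma comp_le_partKernel_of_bot {A : Subgroup (Equiv.Perm Ω)} {P : Set (Set Ω)}
    (hA : ∀ a ∈ A, a • P = P) (h : component A P = ⊥) : A ≤ partKernel P := by
  intro a ha b hb
  have hy : componentHom P ⟨a, hA a ha⟩ ∈ component A P :=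
    (mem_component A P).mpr ⟨⟨a, hA a ha⟩, ha, rfl⟩
  rw [h, Subgroup.mem_bot] at hy
  have := congrArg (fun e => ((e : Equiv.Perm ↥P) ⟨b, hb⟩ : Set Ω)) hy
  simpa [componentHom_apply] using this

lemma comp_eq_bot_of_le_partKernel {A : Subgroup (Equiv.Perm Ω)} {P : Set (Set Ω)}
    (h : A ≤ partKernel P) : component A P = ⊥ := by
  rw [eq_bot_iff]
  rintro x ⟨y, hy, rfl⟩
  rw [Subgroup.mem_bot]
  refine Equiv.ext fun b => Subtype.ext ?_
  show (y : Equiv.Perm Ω) • (b : Set Ω) = (b : Set Ω)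
  exact h (Subgroup.mem_subgroupOf.mp hy) (b : Set Ω) b.2

lemma comp_mono (hAB : A ≤ B) : component A P ≤ component B P :=
  Subgroup.map_mono (Subgroup.comap_mono hAB)

lemma comp_normalIn (hAB : A ≤ B)
    (hconj : ∀ g ∈ B, g • P = P → ∀ a ∈ A, g * a * g⁻¹ ∈ A) :
    IsNormalIn (component A P) (component B P) := by
  refine ⟨comp_mono A B P hAB, ?_⟩
  rintro g ⟨y, hy, rfl⟩ n ⟨z, hz, rfl⟩
  have hmem : y * z * y⁻¹ ∈ A.subgroupOf (partStab P) := by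
    rw [Subgroup.mem_subgroupOf]
    exact hconj (y : Equiv.Perm Ω) (Subgroup.mem_subgroupOf.mp hy) y.2
      (z : Equiv.Perm Ω) (Subgroup.mem_subgroupOf.mp hz)
  have : componentHom P y * componentHom P z * (componentHom P y)⁻¹ =
      componentHom P (y * z * y⁻¹) := by
    rw [map_mul, map_mul, map_inv]
  rw [this]
  exact ⟨y * z * y⁻¹, hmem, rfl⟩

lemma comp_commute (h : ∀ a ∈ A, ∀ b ∈ B, a * b = b * a) :
    ∀ x ∈ component A P, ∀ y ∈ component B P, x * y = y * x := by
  rintro x ⟨y, hy, rfl⟩ x' ⟨z, hz, rfl⟩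
  rw [← map_mul, ← map_mul]
  congr 1
  apply Subtype.ext
  exact h _ (Subgroup.mem_subgroupOf.mp hy) _ (Subgroup.mem_subgroupOf.mp hz)

lemma exists_smul_block {A : Subgroup (Equiv.Perm Ω)} {P : Set (Set Ω)}
    (ht : IsTransitivePerm (component A P)) {b b' : Set Ω}
    (hb : b ∈ P) (hb' : b' ∈ P) :
    ∃ a ∈ A, a • P = P ∧ a • b = b' := by
  obtain ⟨gh, hgh, he⟩ := ht ⟨b, hb⟩ ⟨b', hb'⟩
  obtain ⟨y, hyA, rfl⟩ := (mem_component A P).mp hgh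
  refine ⟨(y : Equiv.Perm Ω), hyA, y.2, ?_⟩
  have := congrArg (fun c : ↥P => (c : Set Ω)) he
  simpa [componentHom_apply] using this

end comp

end QPAux

namespace QPAux

open QP

/-- In a quasiprimitive group with non-abelian socle, any normal subgroup
centralising the socle is trivial. -/
lemma key_centralizer {α : Type*} [Finite α] [Nonempty α]
    (H C : Subgroup (Equiv.Perm α))
    (hqp : IsQuasiprimitivePerm H)
    (hna : ¬ ∀ x ∈ socle H, ∀ y ∈ socle H, x * y = y * x)
    (hCH : IsNormalIn C H)
    (hcomm : ∀ c ∈ C, ∀ s ∈ socle H, c * s = s * c) : C = ⊥ := by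
  by_contra hC
  -- find a normal subgroup of H inside C of minimal cardinality
  set S : Set (Subgroup (Equiv.Perm α)) :=
    {L | IsNormalIn L H ∧ L ≠ ⊥ ∧ L ≤ C} with hS
  have hSne : ∃ n, ∃ L ∈ S, Nat.card L = n := ⟨_, C, ⟨hCH, hC, le_rfl⟩, rfl⟩
  obtain ⟨L, hLS, hLcard⟩ := Nat.sInf_mem hSne
  have hmin : ∀ L' ∈ S, Nat.card L ≤ Nat.card L' := by
    intro L' hL'
    rw [hLcard]
    exact Nat.sInf_le ⟨L', hL', rfl⟩
  obtain ⟨hLH, hLne, hLC⟩ := hLS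
  have hLmin : IsMinimalNormalIn L H := by
    refine ⟨hLH, hLne, fun K hKH hKne hKL => ?_⟩
    exact Subgroup.eq_of_le_of_card_ge hKL (hmin K ⟨hKH, hKne, hKL.trans hLC⟩)
  have hLsoc : L ≤ socle H :=
    le_iSup₂ (f := fun (N : Subgroup (Equiv.Perm α)) (_ : N ∈ _) => N) L hLmin
  have hLtrans : IsTransitivePerm L := hqp.2 L hLH hLne
  have hLab : ∀ x ∈ L, ∀ y ∈ L, x * y = y * x :=
    fun x hx y hy => hcomm x (hLC hx) y (hLsoc hy)
  -- every element of the socle lies in L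
  have hsocL : ∀ s ∈ socle H, s ∈ L := by
    intro s hs
    have a₀ : α := Classical.arbitrary α
    obtain ⟨l, hl, hla⟩ := hLtrans a₀ (s a₀)
    have : s = l := by
      ext b
      obtain ⟨g, hg, rfl⟩ := hLtrans a₀ b
      have h1 : g * s = s * g := hcomm g (hLC hg) s hs
      have h2 : l * g = g * l := hLab l hl g hg
      calc s (g a₀) = (s * g) a₀ := rfl
        _ = (g * s) a₀ := by rw [h1]
        _ = g (s a₀) := rfl
        _ = g (l a₀) := by rw [hla]
        _ = (g * l) a₀ := rfl
        _ = (l * g) a₀ := by rw [h2]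
        _ = l (g a₀) := rfl
    rw [this]
    exact hl
  exact hna fun x hx y hy => hLab x (hsocL x hx) y (hsocL y hy)

end QPAux

open QP QPAux

/-- If E is a blow-up decomposition for G and some component G^{Γ₀} is
quasiprimitive with non-abelian socle, then G is quasiprimitive. -/
theorem blowup_component_quasiprimitive_implies_quasiprimitive
    {Ω : Type*} [Finite Ω]
    (G : Subgroup (Equiv.Perm Ω)) (E : Set (Set (Set Ω)))
    (hE : QP.IsBlowUpDecomp G E)
    (Γ₀ : Set (Set Ω)) (hΓ₀ : Γ₀ ∈ E)
    (hcomp : QP.IsQuasiprimitivePerm (QP.component G Γ₀))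
    (hnonab : ¬ ∀ x ∈ QP.socle (QP.component G Γ₀),
        ∀ y ∈ QP.socle (QP.component G Γ₀), x * y = y * x) :
    QP.IsQuasiprimitivePerm G := by
  classical
  obtain ⟨hCart, hInv, hTransE, M, hMG, hMtrans, hMdec, hMsoc⟩ := hE
  obtain ⟨hfix, N, hNle, hNcomm, hNsup, hNdisj, hNker⟩ := hMdec
  have hMleG : M ≤ G := hMG.1
  have hGconjM : ∀ g ∈ G, ∀ m ∈ M, g * m * g⁻¹ ∈ M := hMG.2
  -- Γ₀ is a nonempty set of blocks
  have hΓprop := hCart.2.1 Γ₀ hΓ₀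
  have hΓne : ∃ b, b ∈ Γ₀ := by
    by_contra hno
    push_neg at hno
    exact hΓprop.2.2 fun b hb => absurd hb (hno b)
  haveI : Nonempty ↥Γ₀ := ⟨⟨hΓne.choose, hΓne.choose_spec⟩⟩
  have hMstab : ∀ P ∈ E, ∀ m ∈ M, m • P = P := fun P hP m hm => hfix m hm P hP
  -- the socle at Γ₀ is nontrivial
  have hsoc_ne : socle (component G Γ₀) ≠ ⊥ := by
    intro h
    apply hnonab
    intro x hx y hy
    rw [h, Subgroup.mem_bot] at hx hy
    rw [hx, hy]
  have hMcomp_ne : component M Γ₀ ≠ ⊥ := by rw [hMsoc Γ₀ hΓ₀]; exact hsoc_ne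
  -- a G-invariant subgroup contained in the kernel at Γ₀ is trivial
  have normal_kernel_bot : ∀ A : Subgroup (Equiv.Perm Ω),
      (∀ g ∈ G, ∀ a ∈ A, g * a * g⁻¹ ∈ A) → A ≤ partKernel Γ₀ → A = ⊥ := by
    intro A hAconj hA0
    have hall : ∀ Q ∈ E, ∀ a ∈ A, a ∈ partKernel Q := by
      intro Q hQ a ha
      obtain ⟨g, hg, hgQ⟩ := hTransE Γ₀ hΓ₀ Q hQ
      have h1 : g⁻¹ * a * g ∈ A := by
        have := hAconj g⁻¹ (inv_mem hg) a ha
        rwa [inv_inv] at this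
      have h3 := conj_mem_partKernel (g := g) (hA0 h1)
      rw [hgQ] at h3
      have e : g * (g⁻¹ * a * g) * g⁻¹ = a := by group
      rwa [e] at h3
    rw [eq_bot_iff]
    intro a ha
    rw [Subgroup.mem_bot]
    exact eq_one_of_mem_all_kernels hCart fun P hP => hall P hP a ha
  -- M is not contained in any partition kernel
  have hMnotker : ∀ Q ∈ E, ¬ M ≤ partKernel Q := by
    intro Q hQ hle
    apply hMcomp_ne
    apply comp_eq_bot_of_le_partKernel
    intro m hm
    obtain ⟨g, hg, hgQ⟩ := hTransE Q hQ Γ₀ hΓ₀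
    have h1 : g⁻¹ * m * g ∈ M := by
      have := hGconjM g⁻¹ (inv_mem hg) m hm
      rwa [inv_inv] at this
    have h2 := conj_mem_partKernel (g := g) (hle h1)
    rw [hgQ] at h2
    have e : g * (g⁻¹ * m * g) * g⁻¹ = m := by group
    rwa [e] at h2
  -- each N Q is nontrivial
  have hN_ne : ∀ Q ∈ E, N Q ≠ ⊥ := by
    intro Q hQ hbot
    apply hMnotker Q hQ
    have h1 : M ≤ ⨆ P ∈ E \ {Q}, N P := by
      rw [← hNsup]
      refine iSup₂_le fun P hP => ?_
      by_cases hPQ : P = Q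
      · rw [hPQ, hbot]; exact bot_le
      · exact le_iSup₂_of_le P ⟨hP, hPQ⟩ le_rfl
    rw [← hNker Q hQ] at h1
    exact h1.trans inf_le_right
  -- N P lies in the kernel of every other partition
  have hNker' : ∀ P ∈ E, ∀ Q ∈ E, Q ≠ P → N P ≤ partKernel Q := by
    intro P hP Q hQ hne
    have h1 : N P ≤ ⨆ R ∈ E \ {Q}, N R :=
      le_iSup₂_of_le P ⟨hP, fun h => hne (Set.mem_singleton_iff.mp h).symm⟩ le_rfl
    rw [← hNker Q hQ] at h1
    exact h1.trans inf_le_right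
  -- G is transitive
  have hGtrans : IsTransitivePerm G := by
    intro a b
    obtain ⟨g, hg, hgab⟩ := hMtrans a b
    exact ⟨g, hMleG hg, hgab⟩
  refine ⟨hGtrans, ?_⟩
  intro K hKG hKne
  -- a G-invariant subgroup stabilising partitions and centralising M is trivial
  have main_centralizer : ∀ A : Subgroup (Equiv.Perm Ω), A ≤ G →
      (∀ g ∈ G, ∀ a ∈ A, g * a * g⁻¹ ∈ A) →
      (∀ P ∈ E, ∀ a ∈ A, a • P = P) →
      (∀ a ∈ A, ∀ m ∈ M, a * m = m * a) → A = ⊥ := by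
    intro A hAG hAconj hAstab hAM
    have h1 : IsNormalIn (component A Γ₀) (component G Γ₀) :=
      comp_normalIn A G Γ₀ hAG fun g hg _ a ha => hAconj g hg a ha
    have h2 : ∀ x ∈ component A Γ₀, ∀ s ∈ socle (component G Γ₀), x * s = s * x := by
      rw [← hMsoc Γ₀ hΓ₀]
      exact comp_commute A M Γ₀ hAM
    have h3 : component A Γ₀ = ⊥ :=
      key_centralizer (component G Γ₀) _ hcomp hnonab h1 h2
    exact normal_kernel_bot A hAconj
      (comp_le_partKernel_of_bot (fun a ha => hAstab Γ₀ hΓ₀ a ha) h3)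
  by_cases hKM : K ⊓ M = ⊥
  · -- K centralises M, hence is trivial: contradiction
    exfalso
    apply hKne
    have hcom : ∀ k ∈ K, ∀ m ∈ M, k * m = m * k := by
      intro k hk m hm
      have c1 : k * m * k⁻¹ * m⁻¹ ∈ M :=
        mul_mem (hGconjM k (hKG.1 hk) m hm) (inv_mem hm)
      have c2 : k * m * k⁻¹ * m⁻¹ ∈ K := by
        have h1 : m * k⁻¹ * m⁻¹ ∈ K := hKG.2 m (hMleG hm) k⁻¹ (inv_mem hk)
        have e : k * m * k⁻¹ * m⁻¹ = k * (m * k⁻¹ * m⁻¹) := by group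
        rw [e]
        exact mul_mem hk h1
      have hc : k * m * k⁻¹ * m⁻¹ ∈ K ⊓ M := ⟨c2, c1⟩
      rw [hKM, Subgroup.mem_bot] at hc
      have e2 : (k * m) * (m * k)⁻¹ = 1 := by rw [← hc]; group
      exact mul_inv_eq_one.mp e2
    have hKstab : ∀ P ∈ E, ∀ k ∈ K, k • P = P := by
      intro P hP k hk
      by_contra hne'
      have hQE : k • P ∈ E := hInv k (hKG.1 hk) P hP
      have hle : M ⊓ partKernel P ≤ M ⊓ partKernel (k • P) := by
        rintro x ⟨hxM, hxK⟩
        have h3 := conj_mem_partKernel (g := k) hxK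
        have e : k * x * k⁻¹ = x := by
          rw [hcom k hk x hxM]
          exact mul_inv_cancel_right x k
        rw [e] at h3
        exact ⟨hxM, h3⟩
      rw [hNker P hP, hNker (k • P) hQE] at hle
      have h4 : N (k • P) ≤ ⨆ R ∈ E \ {P}, N R :=
        le_iSup₂_of_le (k • P) ⟨hQE, hne'⟩ le_rfl
      have h5 : N (k • P) ≤ N (k • P) ⊓ ⨆ R ∈ E \ {k • P}, N R :=
        le_inf le_rfl (h4.trans hle)
      rw [hNdisj (k • P) hQE] at h5
      exact hN_ne (k • P) hQE (le_bot_iff.mp h5)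
    exact main_centralizer K hKG.1 hKG.2 hKstab hcom
  · -- K ⊓ M is a nontrivial normal subgroup of G inside M
    have hRG : K ⊓ M ≤ G := inf_le_left.trans hKG.1
    have hRconj : ∀ g ∈ G, ∀ r ∈ K ⊓ M, g * r * g⁻¹ ∈ K ⊓ M := fun g hg r hr =>
      ⟨hKG.2 g hg r hr.1, hGconjM g hg r hr.2⟩
    set W : Subgroup (Equiv.Perm Ω) := M ⊓ ⨅ P ∈ E \ {Γ₀}, partKernel P with hWdef
    have hWmem : ∀ x : Equiv.Perm Ω,
        x ∈ W ↔ x ∈ M ∧ ∀ P ∈ E, P ≠ Γ₀ → x ∈ partKernel P := by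
      intro x
      rw [hWdef]
      simp only [Subgroup.mem_inf, Subgroup.mem_iInf, Set.mem_diff,
        Set.mem_singleton_iff, and_imp]
    by_cases hSbot : component (K ⊓ W) Γ₀ = ⊥
    · -- then K ⊓ M centralises M, hence is trivial: contradiction
      exfalso
      apply hKM
      have hSWbot : K ⊓ W = ⊥ := by
        rw [eq_bot_iff]
        intro s hs
        rw [Subgroup.mem_bot]
        have hsW := (hWmem s).mp hs.2
        have hsK0 : s ∈ partKernel Γ₀ :=
          comp_le_partKernel_of_bot (A := K ⊓ W)
            (fun a ha => hMstab Γ₀ hΓ₀ a ((hWmem a).mp ha.2).1) hSbot hs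
        apply eq_one_of_mem_all_kernels hCart
        intro P hP
        by_cases hPG : P = Γ₀
        · rw [hPG]; exact hsK0
        · exact hsW.2 P hP hPG
      have hRW : ∀ r ∈ K ⊓ M, ∀ w ∈ W, r * w = w * r := by
        intro r hr w hw
        have hwM : w ∈ M := ((hWmem w).mp hw).1
        have c2 : r * w * r⁻¹ * w⁻¹ ∈ K := by
          have h1 : w * r⁻¹ * w⁻¹ ∈ K :=
            hKG.2 w (hMleG hwM) r⁻¹ (inv_mem hr.1)
          have e : r * w * r⁻¹ * w⁻¹ = r * (w * r⁻¹ * w⁻¹) := by group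
          rw [e]
          exact mul_mem hr.1 h1
        have c3 : r * w * r⁻¹ * w⁻¹ ∈ W := by
          have h1 : r * w * r⁻¹ ∈ W := by
            refine (hWmem _).mpr ⟨mul_mem (mul_mem hr.2 hwM) (inv_mem hr.2), ?_⟩
            intro P hP hPG
            have h2 := conj_mem_partKernel (g := r) (((hWmem w).mp hw).2 P hP hPG)
            rwa [hMstab P hP r hr.2] at h2
          exact mul_mem h1 (inv_mem hw)
        have hc : r * w * r⁻¹ * w⁻¹ ∈ K ⊓ W := ⟨c2, c3⟩
        rw [hSWbot, Subgroup.mem_bot] at hc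
        have e2 : (r * w) * (w * r)⁻¹ = 1 := by rw [← hc]; group
        exact mul_inv_eq_one.mp e2
      have hNc : ∀ P ∈ E, ∀ n ∈ N P, ∀ r ∈ K ⊓ M, r * n = n * r := by
        intro P hP n hn r hr
        obtain ⟨g, hg, hgP⟩ := hTransE Γ₀ hΓ₀ P hP
        have hn' : g⁻¹ * n * g ∈ W := by
          refine (hWmem _).mpr ⟨?_, ?_⟩
          · have := hGconjM g⁻¹ (inv_mem hg) n (hNle P hP hn)
            rwa [inv_inv] at this
          · intro Q hQ hQG
            have hgQ : g • Q ∈ E := hInv g hg Q hQ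
            have hgQP : g • Q ≠ P := by
              intro h
              apply hQG
              rw [← hgP] at h
              exact MulAction.injective g h
            have h2 : n ∈ partKernel (g • Q) := hNker' P hP (g • Q) hgQ hgQP hn
            exact conj_mem_partKernel' h2
        have hr' : g⁻¹ * r * g ∈ K ⊓ M := by
          have := hRconj g⁻¹ (inv_mem hg) r hr
          rwa [inv_inv] at this
        have hcw := hRW _ hr' _ hn'
        have e1 : g⁻¹ * r * g * (g⁻¹ * n * g) = g⁻¹ * (r * n) * g := by group
        have e2 : g⁻¹ * n * g * (g⁻¹ * r * g) = g⁻¹ * (n * r) * g := by group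
        rw [e1, e2] at hcw
        exact mul_left_cancel (mul_right_cancel hcw)
      have hRM : ∀ r ∈ K ⊓ M, ∀ m ∈ M, r * m = m * r := by
        have hcent : M ≤ Subgroup.centralizer ((K ⊓ M : Subgroup (Equiv.Perm Ω)) : Set (Equiv.Perm Ω)) := by
          have hsup : (⨆ P ∈ E, N P) ≤
              Subgroup.centralizer ((K ⊓ M : Subgroup (Equiv.Perm Ω)) : Set (Equiv.Perm Ω)) := by
            refine iSup₂_le fun P hP => ?_
            intro n hn
            exact Subgroup.mem_centralizer_iff.mpr fun r hr => hNc P hP n hn r hr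
          rwa [hNsup] at hsup
        intro r hr m hm
        exact (Subgroup.mem_centralizer_iff.mp (hcent hm) r hr)
      exact main_centralizer (K ⊓ M) hRG hRconj
        (fun P hP r hr => hMstab P hP r hr.2) hRM
    · -- the component of K ⊓ W is a nontrivial normal subgroup, hence transitive
      have hSG : K ⊓ W ≤ G := inf_le_left.trans hKG.1
      have hSnorm : IsNormalIn (component (K ⊓ W) Γ₀) (component G Γ₀) := by
        apply comp_normalIn (K ⊓ W) G Γ₀ hSG
        intro g hg hgstab s hs
        refine ⟨hKG.2 g hg s hs.1, ?_⟩
        have hsW := (hWmem s).mp hs.2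
        refine (hWmem _).mpr ⟨hGconjM g hg s hsW.1, ?_⟩
        intro P hP hPG
        have hgP : g⁻¹ • P ∈ E := hInv g⁻¹ (inv_mem hg) P hP
        have hgPne : g⁻¹ • P ≠ Γ₀ := by
          intro h
          apply hPG
          have := congrArg (g • ·) h
          simp only [smul_inv_smul] at this
          rw [this, hgstab]
        have h2 : s ∈ partKernel (g⁻¹ • P) := hsW.2 _ hgP hgPne
        have h3 := conj_mem_partKernel (g := g) h2
        rwa [smul_inv_smul] at h3
      have hStrans : IsTransitivePerm (component (K ⊓ W) Γ₀) :=
        hcomp.2 _ hSnorm hSbot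
      -- block-moving elements for each partition Q ∈ E
      have hTQ : ∀ Q ∈ E, ∀ b ∈ Q, ∀ b' ∈ Q, ∃ s, s ∈ K ∧
          (∀ P ∈ E, P ≠ Q → s ∈ partKernel P) ∧ s • b = b' := by
        intro Q hQ b hb b' hb'
        obtain ⟨g, hg, hgQ⟩ := hTransE Γ₀ hΓ₀ Q hQ
        have hb0 : g⁻¹ • b ∈ Γ₀ := by
          rw [← hgQ] at hb
          exact Set.mem_smul_set_iff_inv_smul_mem.mp hb
        have hb0' : g⁻¹ • b' ∈ Γ₀ := by
          rw [← hgQ] at hb'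
          exact Set.mem_smul_set_iff_inv_smul_mem.mp hb'
        obtain ⟨s₀, hs₀, _, hsb⟩ := exists_smul_block hStrans hb0 hb0'
        refine ⟨g * s₀ * g⁻¹, hKG.2 g hg s₀ hs₀.1, ?_, ?_⟩
        · intro P hP hPQ
          have hgPne : g⁻¹ • P ≠ Γ₀ := by
            intro h
            apply hPQ
            have := congrArg (g • ·) h
            simp only [smul_inv_smul] at this
            rw [this, hgQ]
          have h2 : s₀ ∈ partKernel (g⁻¹ • P) :=
            ((hWmem s₀).mp hs₀.2).2 _ (hInv g⁻¹ (inv_mem hg) P hP) hgPne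
          have h3 := conj_mem_partKernel (g := g) h2
          rwa [smul_inv_smul] at h3
        · rw [mul_smul, mul_smul, hsb, smul_inv_smul]
      -- now prove transitivity of K
      intro ω ω'
      have key : ∀ F : Finset (Set (Set Ω)), ↑F ⊆ E →
          ∃ r ∈ K, ∀ P ∈ F, ∀ b ∈ P, ω' ∈ b → r • ω ∈ b := by
        intro F
        induction F using Finset.induction_on with
        | empty => intro _; exact ⟨1, one_mem K, by simp⟩
        | @insert Q F hQF ih =>
          intro hsub
          have hQE : Q ∈ E := hsub (Finset.mem_insert_self Q F)
          have hFE : ↑F ⊆ E := fun P hP => hsub (Finset.mem_insert_of_mem hP)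
          obtain ⟨r, hrK, hr⟩ := ih hFE
          have hpart := (hCart.2.1 Q hQE).1
          have hb₀ := blockOf_spec hpart (r • ω)
          have hb₁ := blockOf_spec hpart ω'
          obtain ⟨s, hsK, hsker, hsb⟩ := hTQ Q hQE _ hb₀.1 _ hb₁.1
          refine ⟨s * r, mul_mem hsK hrK, ?_⟩
          intro P hP b hbP hω'b
          rcases Finset.mem_insert.mp hP with h | h
          · subst h
            have hbe : b = blockOf P ω' := blockOf_unique hpart hbP hω'b
            have hmem : (s * r) • ω ∈ s • blockOf P (r • ω) := by
              rw [mul_smul]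
              exact Set.smul_mem_smul_set hb₀.2
            rwa [hsb, ← hbe] at hmem
          · have hPQ : P ≠ Q := fun he => hQF (he ▸ h)
            have h2 : r • ω ∈ b := hr P h b hbP hω'b
            have h3 : s • b = b := hsker P (hFE h) hPQ b hbP
            have hmem : (s * r) • ω ∈ s • b := by
              rw [mul_smul]
              exact Set.smul_mem_smul_set h2
            rwa [h3] at hmem
      obtain ⟨r, hrK, hr⟩ := key hCart.1.toFinset (by simp)
      refine ⟨r, hrK, ?_⟩
      obtain ⟨z, hz, huniq⟩ := hCart.2.2 (fun P => blockOf P ω')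
        (fun P hP => (blockOf_spec (hCart.2.1 P hP).1 ω').1)
      have e1 : r • ω = z := huniq _ (fun P hP =>
        hr P (hCart.1.mem_toFinset.mpr hP) _
          (blockOf_spec (hCart.2.1 P hP).1 ω').1
          (blockOf_spec (hCart.2.1 P hP).1 ω').2)
      have e2 : ω' = z := huniq _ (fun P hP =>
        (blockOf_spec (hCart.2.1 P hP).1 ω').2)
      exact e1.trans e2.symm
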